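/- Let φ : ℝ → ℝ be three times continuously differentiable with sup_x φ''(x) − inf_x φ''(x) ≤ B and |φ'''(x)| ≤ K3 for all x, and let β > 0, μ0, δr ∈ ℝ satisfy β + φ''(μ0) − B > 0. Then the hybrid distribution h is a well-defined probability measure with finite variance v_h > 0, and its precision satisfies v_h⁻¹ ≥ β + E_h[φ''(x)] − K3²·(β + φ''(μ0) + B)²·(β + φ''(μ0) − B)⁻⁴. -/

import Mathlib

open MeasureTheory Real Filter
open Set Topology
open scoped ENNReal NNReal

noncomputable section

/-- Unnormalized density of the hybrid distribution:
`l(x) · exp(−(β/2)x² + (β μ0 − δr)x)` with `l = exp (−φ)`. -/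
def hybridDens (φ : ℝ → ℝ) (β μ0 δr : ℝ) (x : ℝ) : ℝ :=
  Real.exp (-(φ x) - β / 2 * x ^ 2 + (β * μ0 - δr) * x)

/-- The hybrid distribution: the normalized measure with density
proportional to `hybridDens`. -/
def hybrid (φ : ℝ → ℝ) (β μ0 δr : ℝ) : Measure ℝ :=
  ((volume.withDensity fun x => ENNReal.ofReal (hybridDens φ β μ0 δr x)) Set.univ)⁻¹ •
    (volume.withDensity fun x => ENNReal.ofReal (hybridDens φ β μ0 δr x))

/-- Mean of the hybrid distribution. -/
def hybridMean (φ : ℝ → ℝ) (β μ0 δr : ℝ) : ℝ :=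
  ∫ x, x ∂(hybrid φ β μ0 δr)

/-- Variance of the hybrid distribution. -/
def hybridVar (φ : ℝ → ℝ) (β μ0 δr : ℝ) : ℝ :=
  ∫ x, (x - hybridMean φ β μ0 δr) ^ 2 ∂(hybrid φ β μ0 δr)

namespace HybridAux

/-- If `G'` is `≤ 0` left of `t0` and `≥ 0` right of `t0`, then `G` has a global min at `t0`. -/
lemma global_min_of_deriv_sign {G G' : ℝ → ℝ} (hG : ∀ x, HasDerivAt G (G' x) x) (t0 : ℝ)
    (h1 : ∀ x, x ≤ t0 → G' x ≤ 0) (h2 : ∀ x, t0 ≤ x → 0 ≤ G' x) (x : ℝ) : G t0 ≤ G x := by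
  have hd : Differentiable ℝ G := fun x => (hG x).differentiableAt
  have hder : ∀ y, deriv G y = G' y := fun y => (hG y).deriv
  rcases le_total t0 x with h | h
  · have hm : MonotoneOn G (Ici t0) := by
      apply monotoneOn_of_deriv_nonneg (convex_Ici t0) hd.continuous.continuousOn
        (hd.differentiableOn)
      intro y hy
      rw [hder]
      exact h2 y (le_of_lt (by simpa using hy))
    exact hm (self_mem_Ici) h h
  · have hm : AntitoneOn G (Iic t0) := by
      apply antitoneOn_of_deriv_nonpos (convex_Iic t0) hd.continuous.continuousOn
        (hd.differentiableOn)
      intro y hy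
      rw [hder]
      exact h1 y (le_of_lt (by simpa using hy))
    exact hm h (self_mem_Iic) h

/-- Mean value bounds from derivative bounds. -/
lemma mvt_bounds {f f' : ℝ → ℝ} (hf : ∀ x, HasDerivAt f (f' x) x) {m M : ℝ}
    (hm : ∀ x, m ≤ f' x) (hM : ∀ x, f' x ≤ M) {y x : ℝ} (hyx : y ≤ x) :
    m * (x - y) ≤ f x - f y ∧ f x - f y ≤ M * (x - y) := by
  constructor
  · have hmono : Monotone (fun t => f t - m * t) := by
      have : ∀ t, HasDerivAt (fun t => f t - m * t) (f' t - m) t := fun t =>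
        (hf t).sub ((hasDerivAt_id t).const_mul m |>.congr_deriv (by ring))
      apply monotone_of_deriv_nonneg (fun t => ((this t).differentiableAt))
      intro t
      rw [(this t).deriv]
      linarith [hm t]
    have := hmono hyx
    simp only at this
    linarith
  · have hmono : Monotone (fun t => M * t - f t) := by
      have : ∀ t, HasDerivAt (fun t => M * t - f t) (M - f' t) t := fun t =>
        (((hasDerivAt_id t).const_mul M).congr_deriv (by ring)).sub (hf t)
      apply monotone_of_deriv_nonneg (fun t => ((this t).differentiableAt))
      intro t
      rw [(this t).deriv]
      linarith [hM t]
    have := hmono hyx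
    simp only at this
    linarith

/-- Second-order Taylor bound. -/
lemma taylor_bound {f f' f'' : ℝ → ℝ} (hf : ∀ x, HasDerivAt f (f' x) x)
    (hf' : ∀ x, HasDerivAt f' (f'' x) x) {K : ℝ} (hK : ∀ x, |f'' x| ≤ K) (c x : ℝ) :
    |f x - f c - f' c * (x - c)| ≤ K / 2 * (x - c) ^ 2 := by
  have hdb : ∀ {y z : ℝ}, y ≤ z → -K * (z - y) ≤ f' z - f' y ∧ f' z - f' y ≤ K * (z - y) :=
    fun {y z} h => mvt_bounds hf' (fun t => neg_le_of_abs_le (hK t))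
      (fun t => le_of_abs_le (hK t)) h
  -- upper bound: G x = K/2 (x-c)^2 - (f x - f c - f' c (x-c)) ≥ 0
  have upper : ∀ z, f z - f c - f' c * (z - c) ≤ K / 2 * (z - c) ^ 2 := by
    intro z
    have hG : ∀ t, HasDerivAt (fun t => K / 2 * (t - c) ^ 2 - (f t - f c - f' c * (t - c)))
        (K * (t - c) - (f' t - f' c)) t := by
      intro t
      have h1 : HasDerivAt (fun t : ℝ => K / 2 * (t - c) ^ 2) (K * (t - c)) t := by
        have := ((hasDerivAt_id t).sub_const c).pow 2
        have := this.const_mul (K / 2)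
        convert this using 1; rfl; rfl; rfl; simp [id_eq]; ring
      have h2 : HasDerivAt (fun t => f t - f c - f' c * (t - c)) (f' t - f' c) t := by
        have := (hf t).sub_const (f c)
        have h3 := ((hasDerivAt_id t).sub_const c).const_mul (f' c)
        convert this.sub h3 using 1; rfl; rfl; rfl; ring
      exact h1.sub h2
    have hmin := global_min_of_deriv_sign hG c (fun t ht => by
        have := (hdb ht).2
        linarith) (fun t ht => by
        have := (hdb ht).2
        linarith) z
    simp only [sub_self, ne_eq, OfNat.ofNat_ne_zero, not_false_eq_true, zero_pow, mul_zero,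
      sub_zero, mul_zero, sub_self] at hmin
    nlinarith [hmin]
  have lower : ∀ z, -(K / 2 * (z - c) ^ 2) ≤ f z - f c - f' c * (z - c) := by
    intro z
    have hG : ∀ t, HasDerivAt (fun t => K / 2 * (t - c) ^ 2 + (f t - f c - f' c * (t - c)))
        (K * (t - c) + (f' t - f' c)) t := by
      intro t
      have h1 : HasDerivAt (fun t : ℝ => K / 2 * (t - c) ^ 2) (K * (t - c)) t := by
        have := ((hasDerivAt_id t).sub_const c).pow 2
        have := this.const_mul (K / 2)
        convert this using 1; rfl; rfl; rfl; simp [id_eq]; ring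
      have h2 : HasDerivAt (fun t => f t - f c - f' c * (t - c)) (f' t - f' c) t := by
        have := (hf t).sub_const (f c)
        have h3 := ((hasDerivAt_id t).sub_const c).const_mul (f' c)
        convert this.sub h3 using 1; rfl; rfl; rfl; ring
      exact h1.add h2
    have hmin := global_min_of_deriv_sign hG c (fun t ht => by
        have := (hdb ht).1
        linarith) (fun t ht => by
        have := (hdb ht).1
        linarith) z
    simp only [sub_self, ne_eq, OfNat.ofNat_ne_zero, not_false_eq_true, zero_pow, mul_zero,
      sub_zero, add_zero, sub_self] at hmin
    nlinarith [hmin]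
  rw [abs_le]
  exact ⟨by linarith [lower x], upper x⟩

/-- Cauchy-Schwarz for integrals. -/
lemma integral_cauchy_schwarz {μ : Measure ℝ} {f g : ℝ → ℝ}
    (hf2 : Integrable (fun x => f x ^ 2) μ) (hg2 : Integrable (fun x => g x ^ 2) μ)
    (hfg : Integrable (fun x => f x * g x) μ) :
    (∫ x, f x * g x ∂μ) ^ 2 ≤ (∫ x, f x ^ 2 ∂μ) * (∫ x, g x ^ 2 ∂μ) := by
  set A := ∫ x, f x ^ 2 ∂μ
  set Bq := ∫ x, f x * g x ∂μ
  set C := ∫ x, g x ^ 2 ∂μ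
  have hA : 0 ≤ A := integral_nonneg (fun x => sq_nonneg _)
  have hC : 0 ≤ C := integral_nonneg (fun x => sq_nonneg _)
  have key : ∀ t : ℝ, 0 ≤ t ^ 2 * A - 2 * t * Bq + C := by
    intro t
    have h0 : 0 ≤ ∫ x, (t * f x - g x) ^ 2 ∂μ := integral_nonneg (fun x => sq_nonneg _)
    have h1 : ∫ x, (t * f x - g x) ^ 2 ∂μ = t ^ 2 * A - 2 * t * Bq + C := by
      have : (fun x => (t * f x - g x) ^ 2) =
          (fun x => t ^ 2 * f x ^ 2 - 2 * t * (f x * g x) + g x ^ 2) := by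
        funext x; ring
      have i1 : Integrable (fun x => t ^ 2 * f x ^ 2 - 2 * t * (f x * g x)) μ :=
        (hf2.const_mul _).sub (hfg.const_mul _)
      have i2 : Integrable (fun x => t ^ 2 * f x ^ 2) μ := hf2.const_mul _
      have i3 : Integrable (fun x => 2 * t * (f x * g x)) μ := hfg.const_mul _
      rw [this, integral_add i1 hg2, integral_sub i2 i3, MeasureTheory.integral_const_mul, MeasureTheory.integral_const_mul]
    linarith [h1 ▸ h0]
  rcases eq_or_lt_of_le hA with hA0 | hA0
  · -- A = 0: show Bq = 0
    have hB0 : Bq = 0 := by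
      by_contra hB
      have h1 := key ((C + 1) / (2 * Bq))
      rw [← hA0] at h1
      have h2 : ((C + 1) / (2 * Bq)) ^ 2 * 0 = 0 := mul_zero _
      have h3 : 2 * ((C + 1) / (2 * Bq)) * Bq = C + 1 := by field_simp
      linarith
    rw [hB0]
    nlinarith
  · have h1 := key (Bq / A)
    have h2 : 0 ≤ Bq ^ 2 / A - 2 * (Bq ^ 2 / A) + C := by
      have h4 : (Bq / A) ^ 2 * A = Bq ^ 2 / A := by field_simp
      have h3 : 2 * (Bq / A) * Bq = 2 * (Bq ^ 2 / A) := by field_simp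
      nlinarith [h1]
    have : Bq ^ 2 / A ≤ C := by linarith
    calc Bq ^ 2 = (Bq ^ 2 / A) * A := by field_simp
      _ ≤ C * A := mul_le_mul_of_nonneg_right this hA0.le
      _ = A * C := by ring



lemma pow_le_factorial_mul_exp' {x : ℝ} (hx : 0 ≤ x) (n : ℕ) :
    x ^ n ≤ (n.factorial : ℝ) * exp x := by
  have h := Real.sum_le_exp_of_nonneg hx (n+1)
  have h2 : x ^ n / (n.factorial : ℝ) ≤ ∑ i ∈ Finset.range (n+1), x ^ i / (i.factorial : ℝ) :=
    Finset.single_le_sum (f := fun i : ℕ => x ^ i / (i.factorial : ℝ))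
      (fun i _ => by positivity) (Finset.self_mem_range_succ n)
  have hn : (0:ℝ) < (n.factorial : ℝ) := by positivity
  calc x ^ n = (x ^ n / (n.factorial:ℝ)) * (n.factorial:ℝ) := by field_simp
  _ ≤ exp x * (n.factorial:ℝ) := mul_le_mul_of_nonneg_right (le_trans h2 h) hn.le
  _ = (n.factorial : ℝ) * exp x := by ring

/-- Polynomial times Gaussian is dominated by a wider Gaussian. -/
lemma poly_exp_bound {c : ℝ} (hc : 0 < c) (n : ℕ) :
    ∃ D : ℝ, 0 ≤ D ∧ ∀ x : ℝ, (1 + |x|) ^ n * exp (-c * x ^ 2) ≤ D * exp (-(c/2) * x ^ 2) := by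
  refine ⟨2 ^ n * (2 + (n.factorial : ℝ) * (2 / c) ^ n), by positivity, fun x => ?_⟩
  have h1 : (1 + |x|) ^ n ≤ 2 ^ n * (1 + |x| ^ n) := by
    rcases le_total (|x|) 1 with h | h
    · have : (1 + |x|) ^ n ≤ 2 ^ n := by
        apply pow_le_pow_left₀ (by positivity) (by linarith)
      have h2 : (0:ℝ) ≤ |x| ^ n := by positivity
      nlinarith [pow_pos (by norm_num : (0:ℝ) < 2) n]
    · have h2 : (1 + |x|) ^ n ≤ (2 * |x|) ^ n :=
        pow_le_pow_left₀ (by positivity) (by linarith) n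
      have h3 : (2 * |x|) ^ n = 2 ^ n * |x| ^ n := mul_pow 2 (|x|) n
      nlinarith [pow_pos (by norm_num : (0:ℝ) < 2) n]
  have h2 : |x| ^ n ≤ 1 + (n.factorial : ℝ) * (2 / c) ^ n * exp ((c/2) * x ^ 2) := by
    have hxn : |x| ^ n ≤ 1 + x ^ (2 * n) := by
      have hx0 : (0:ℝ) ≤ x ^ (2*n) := by rw [pow_mul]; positivity
      rcases le_total (|x|) 1 with h | h
      · have h0 : |x| ^ n ≤ 1 := pow_le_one₀ (abs_nonneg x) h
        linarith
      · have ha : |x| ^ n ≤ |x| ^ (2*n) := pow_le_pow_right₀ h (by omega)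
        have hb : |x| ^ (2*n) = x ^ (2*n) := by rw [pow_mul, pow_mul, sq_abs]
        linarith
    have h3 : x ^ (2*n) ≤ (n.factorial:ℝ) * (2 / c) ^ n * exp ((c/2) * x ^ 2) := by
      have h0 := pow_le_factorial_mul_exp' (x := (c/2) * x^2) (by positivity) n
      have hxx : x ^ (2*n) = ((c/2) * x^2)^n * (2 / c) ^ n := by
        rw [← mul_pow, pow_mul]
        congr 1
        field_simp
      rw [hxx]
      have h2b : (0:ℝ) ≤ (2/c)^n := by positivity
      calc ((c/2) * x^2)^n * (2/c)^n ≤ ((n.factorial:ℝ) * exp ((c/2)*x^2)) * (2/c)^n :=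
            mul_le_mul_of_nonneg_right h0 h2b
        _ = (n.factorial:ℝ) * (2/c)^n * exp ((c/2)*x^2) := by ring
    linarith
  have e1 : (0:ℝ) < exp (-c * x^2) := exp_pos _
  have hsplit : exp (-c * x^2) * exp ((c/2) * x^2) = exp (-(c/2) * x^2) := by
    rw [← Real.exp_add]; ring_nf
  have hle : exp (-c * x ^ 2) ≤ exp (-(c/2) * x ^ 2) := by
    apply exp_le_exp.2; nlinarith [sq_nonneg x]
  calc (1 + |x|) ^ n * exp (-c * x ^ 2)
      ≤ 2 ^ n * (1 + |x| ^ n) * exp (-c * x ^ 2) := by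
        apply mul_le_mul_of_nonneg_right h1 e1.le
    _ ≤ 2 ^ n * (2 + (n.factorial:ℝ) * (2/c)^n * exp ((c/2) * x^2)) * exp (-c * x^2) := by
        apply mul_le_mul_of_nonneg_right _ e1.le
        have h2n : (0:ℝ) ≤ 2 ^ n := by positivity
        nlinarith
    _ = 2 ^ n * (2 * exp (-c * x^2) + (n.factorial:ℝ) * (2/c)^n *
          (exp (-c * x^2) * exp ((c/2) * x^2))) := by ring
    _ = 2 ^ n * (2 * exp (-c * x^2) + (n.factorial:ℝ) * (2/c)^n * exp (-(c/2) * x^2)) := by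
        rw [hsplit]
    _ ≤ 2 ^ n * (2 + (n.factorial : ℝ) * (2 / c) ^ n) * exp (-(c/2) * x ^ 2) := by
        have h2n : (0:ℝ) ≤ 2 ^ n := by positivity
        have hf : (0:ℝ) ≤ (n.factorial:ℝ) * (2/c)^n := by positivity
        nlinarith [exp_pos (-(c/2) * x^2)]

/-- The structure of hypotheses on the potential. -/
structure Hyp (V V1 V2 V3 : ℝ → ℝ) (a b K3 : ℝ) : Prop where
  dV : ∀ x, HasDerivAt V (V1 x) x
  dV1 : ∀ x, HasDerivAt V1 (V2 x) x
  dV2 : ∀ x, HasDerivAt V2 (V3 x) x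
  ha : 0 < a
  hA : ∀ x, a ≤ V2 x
  hBb : ∀ x, V2 x ≤ b
  hK : ∀ x, |V3 x| ≤ K3

variable {V V1 V2 V3 : ℝ → ℝ} {a b K3 : ℝ}

lemma Hyp.hab (H : Hyp V V1 V2 V3 a b K3) : a ≤ b := le_trans (H.hA 0) (H.hBb 0)
lemma Hyp.hb (H : Hyp V V1 V2 V3 a b K3) : 0 < b := lt_of_lt_of_le H.ha H.hab
lemma Hyp.hK0 (H : Hyp V V1 V2 V3 a b K3) : 0 ≤ K3 := le_trans (abs_nonneg _) (H.hK 0)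

lemma Hyp.mvt1 (H : Hyp V V1 V2 V3 a b K3) {y x : ℝ} (h : y ≤ x) :
    a * (x - y) ≤ V1 x - V1 y ∧ V1 x - V1 y ≤ b * (x - y) :=
  mvt_bounds H.dV1 H.hA H.hBb h

lemma Hyp.quad (H : Hyp V V1 V2 V3 a b K3) (x y : ℝ) :
    a * (x - y) ^ 2 ≤ (x - y) * (V1 x - V1 y) ∧ (x - y) * (V1 x - V1 y) ≤ b * (x - y) ^ 2 := by
  rcases le_total y x with h | h
  · have := H.mvt1 h; constructor <;> nlinarith [this.1, this.2]
  · have := H.mvt1 h; constructor <;> nlinarith [this.1, this.2]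

lemma Hyp.quart (H : Hyp V V1 V2 V3 a b K3) (x y : ℝ) :
    a * (x - y) ^ 4 ≤ (x - y) ^ 3 * (V1 x - V1 y) := by
  rcases le_total y x with h | h
  · have h1 := (H.mvt1 h).1
    nlinarith [mul_le_mul_of_nonneg_left h1 (pow_nonneg (sub_nonneg.2 h) 3)]
  · have h1 := (H.mvt1 h).1
    nlinarith [mul_le_mul_of_nonneg_left h1 (pow_nonneg (sub_nonneg.2 h) 3)]

lemma Hyp.taylor (H : Hyp V V1 V2 V3 a b K3) (c x : ℝ) :
    |V1 x - V1 c - V2 c * (x - c)| ≤ K3 / 2 * (x - c) ^ 2 :=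
  taylor_bound H.dV1 H.dV2 H.hK c x

lemma Hyp.V1_growth (H : Hyp V V1 V2 V3 a b K3) (x : ℝ) :
    |V1 x| ≤ (|V1 0| + (|a| + |b|)) * (1 + |x|) ^ 1 := by
  have hm : ∀ t, -(|a| + |b|) ≤ V2 t := fun t =>
    le_trans (by cases abs_cases a <;> cases abs_cases b <;> linarith) (H.hA t)
  have hM : ∀ t, V2 t ≤ |a| + |b| := fun t =>
    le_trans (H.hBb t) (by cases abs_cases a <;> cases abs_cases b <;> linarith)
  have key : |V1 x - V1 0| ≤ (|a| + |b|) * |x| := by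
    rcases le_total 0 x with h | h
    · have := mvt_bounds H.dV1 hm hM h
      rw [abs_le]; rw [abs_of_nonneg h]; constructor <;> nlinarith [this.1, this.2]
    · have := mvt_bounds H.dV1 hm hM h
      rw [abs_le]; rw [abs_of_nonpos h]; constructor <;> nlinarith [this.1, this.2]
  have h1 : |V1 x| ≤ |V1 0| + (|a| + |b|) * |x| := by
    have := abs_sub_abs_le_abs_sub (V1 x) (V1 0)
    linarith
  have h2 : (0:ℝ) ≤ |a| + |b| := by positivity
  have h3 : (1 + |x|) ^ 1 = 1 + |x| := pow_one _
  rw [h3]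
  nlinarith [abs_nonneg (V1 0), abs_nonneg x]

lemma Hyp.V_growth (H : Hyp V V1 V2 V3 a b K3) (x : ℝ) :
    V 0 + V1 0 * x + a/2 * x^2 ≤ V x := by
  have hG : ∀ t, HasDerivAt (fun t => V t - (V 0 + V1 0 * t + a/2 * t^2))
      (V1 t - (V1 0 + a * t)) t := by
    intro t
    have h1 : HasDerivAt (fun t : ℝ => V 0 + V1 0 * t + a/2 * t^2) (V1 0 + a * t) t := by
      have h2 := ((hasDerivAt_id t).const_mul (V1 0)).const_add (V 0)
      have h3 := ((hasDerivAt_id t).pow 2).const_mul (a/2)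
      convert h2.add h3 using 1
      rfl
      rfl
      rfl
      simp [id_eq]; ring
    exact (H.dV t).sub h1
  have hmin := global_min_of_deriv_sign hG 0
    (fun t ht => by have := (H.mvt1 ht).1; nlinarith)
    (fun t ht => by have := (H.mvt1 ht).1; nlinarith) x
  have hmin2 : V 0 - (V 0 + V1 0 * 0 + a/2 * 0^2) ≤ V x - (V 0 + V1 0 * x + a/2 * x^2) := hmin
  nlinarith [hmin2]

/-- Gaussian domination of the density. -/
lemma Hyp.dens_le (H : Hyp V V1 V2 V3 a b K3) (x : ℝ) :
    exp (-V x) ≤ (exp (-V 0) * exp ((V1 0)^2 / a)) * exp (-(a/4) * x^2) := by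
  have h1 : -V x ≤ -V 0 + (V1 0)^2 / a + -(a/4) * x^2 := by
    have h2 := H.V_growth x
    have ha := H.ha
    have key : 0 ≤ (V1 0)^2 / a + a/4 * x^2 + V1 0 * x := by
      have heq : (V1 0)^2 / a + a/4 * x^2 + V1 0 * x = (V1 0 + a * x / 2)^2 / a := by
        field_simp; ring
      rw [heq]; positivity
    nlinarith
  calc exp (-V x) ≤ exp (-V 0 + (V1 0)^2 / a + -(a/4) * x^2) := exp_le_exp.2 h1
    _ = (exp (-V 0) * exp ((V1 0)^2 / a)) * exp (-(a/4) * x^2) := by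
      rw [← Real.exp_add, ← Real.exp_add]

lemma Hyp.contV (H : Hyp V V1 V2 V3 a b K3) : Continuous V := by
  have : Differentiable ℝ V := fun x => (H.dV x).differentiableAt
  exact this.continuous

lemma Hyp.contV1 (H : Hyp V V1 V2 V3 a b K3) : Continuous V1 := by
  have : Differentiable ℝ V1 := fun x => (H.dV1 x).differentiableAt
  exact this.continuous

lemma Hyp.contV2 (H : Hyp V V1 V2 V3 a b K3) : Continuous V2 := by
  have : Differentiable ℝ V2 := fun x => (H.dV2 x).differentiableAt
  exact this.continuous

/-- Master integrability lemma: polynomially bounded functions are integrable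
against the density. -/
lemma Hyp.integrable_polybound (H : Hyp V V1 V2 V3 a b K3) {f : ℝ → ℝ}
    (hm : AEStronglyMeasurable f volume) {C : ℝ} {n : ℕ}
    (hf : ∀ x, |f x| ≤ C * (1 + |x|) ^ n) :
    Integrable (fun x => f x * exp (-V x)) := by
  obtain ⟨D, hD0, hD⟩ := poly_exp_bound (by linarith [H.ha] : (0:ℝ) < a/4) n
  set M : ℝ := exp (-V 0) * exp ((V1 0)^2 / a) with hM
  have hM0 : 0 < M := by positivity
  have hC0 : 0 ≤ C := by
    have := le_trans (abs_nonneg (f 0)) (hf 0)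
    nlinarith [pow_pos (by norm_num : (0:ℝ) < 1 + |(0:ℝ)|) n]
  have hmm : AEStronglyMeasurable (fun x => f x * exp (-V x)) volume :=
    hm.mul ((Real.continuous_exp.comp H.contV.neg).aestronglyMeasurable)
  apply Integrable.mono' (g := fun x => (C * M * D) * exp (-(a/4/2) * x^2))
    (((integrable_exp_neg_mul_sq (by linarith [H.ha] : (0:ℝ) < a/4/2)).const_mul _))
    hmm
  filter_upwards with x
  rw [Real.norm_eq_abs, abs_mul, abs_of_nonneg (exp_pos (-V x)).le]
  have h1 : |f x| * exp (-V x) ≤ (C * (1+|x|)^n) * (M * exp (-(a/4) * x^2)) := by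
    apply mul_le_mul (hf x) _ (exp_pos _).le (by positivity)
    calc exp (-V x) ≤ M * exp (-(a/4) * x^2) := H.dens_le x
    _ = M * exp (-(a/4) * x^2) := rfl
  have h2 : (C * (1+|x|)^n) * (M * exp (-(a/4) * x^2)) =
      (C * M) * ((1+|x|)^n * exp (-(a/4) * x^2)) := by ring
  have h3 : (C*M) * ((1+|x|)^n * exp (-(a/4) * x^2)) ≤ (C*M) * (D * exp (-(a/4/2) * x^2)) :=
    mul_le_mul_of_nonneg_left (hD x) (by positivity)
  calc |f x| * exp (-V x) ≤ (C * M) * ((1+|x|)^n * exp (-(a/4) * x^2)) := by rw [← h2]; exact h1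
    _ ≤ (C*M) * (D * exp (-(a/4/2) * x^2)) := h3
    _ = (C * M * D) * exp (-(a/4/2) * x^2) := by ring

/-- Polynomially bounded functions times the density tend to `0` at `±∞`. -/
lemma Hyp.tendsto_mul_dens (H : Hyp V V1 V2 V3 a b K3) {g : ℝ → ℝ} {C : ℝ} {n : ℕ}
    (hg : ∀ x, |g x| ≤ C * (1 + |x|) ^ n) :
    Tendsto (fun x => g x * exp (-V x)) atTop (𝓝 0) ∧
    Tendsto (fun x => g x * exp (-V x)) atBot (𝓝 0) := by
  obtain ⟨D, hD0, hD⟩ := poly_exp_bound (by linarith [H.ha] : (0:ℝ) < a/4) n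
  set M : ℝ := exp (-V 0) * exp ((V1 0)^2 / a) with hM
  have hM0 : 0 < M := by positivity
  have hC0 : 0 ≤ C := by
    have := le_trans (abs_nonneg (g 0)) (hg 0)
    nlinarith [pow_pos (by norm_num : (0:ℝ) < 1 + |(0:ℝ)|) n]
  have hbound : ∀ x, ‖g x * exp (-V x)‖ ≤ (C * M * D) * exp (-(a/4/2) * x^2) := by
    intro x
    rw [Real.norm_eq_abs, abs_mul, abs_of_nonneg (exp_pos (-V x)).le]
    have h1 : |g x| * exp (-V x) ≤ (C * (1+|x|)^n) * (M * exp (-(a/4) * x^2)) :=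
      mul_le_mul (hg x) (H.dens_le x) (exp_pos _).le (by positivity)
    have h3 : (C*M) * ((1+|x|)^n * exp (-(a/4) * x^2)) ≤ (C*M) * (D * exp (-(a/4/2) * x^2)) :=
      mul_le_mul_of_nonneg_left (hD x) (by positivity)
    nlinarith [h1, h3]
  have hexp_tendsto : ∀ (l : Filter ℝ), Tendsto (fun x : ℝ => x^2) l atTop →
      Tendsto (fun x => (C * M * D) * exp (-(a/4/2) * x^2)) l (𝓝 0) := by
    intro l hl
    have h1 : Tendsto (fun x : ℝ => -(a/4/2) * x^2) l atBot := by
      apply Tendsto.const_mul_atTop_of_neg (by linarith [H.ha]) hl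
    have h2 : Tendsto (fun x => exp (-(a/4/2) * x^2)) l (𝓝 0) :=
      Real.tendsto_exp_atBot.comp h1
    simpa using h2.const_mul (C * M * D)
  have hsq_top : Tendsto (fun x : ℝ => x^2) atTop atTop := by
    apply tendsto_pow_atTop (by norm_num)
  have hsq_bot : Tendsto (fun x : ℝ => x^2) atBot atTop := by
    have h := hsq_top.comp tendsto_neg_atBot_atTop
    exact h.congr fun x => by simp only [Function.comp]; ring
  constructor
  · exact squeeze_zero_norm hbound (hexp_tendsto atTop hsq_top)
  · exact squeeze_zero_norm hbound (hexp_tendsto atBot hsq_bot)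

/-- Integration by parts against the density. -/
lemma Hyp.ibp (H : Hyp V V1 V2 V3 a b K3) {g g' : ℝ → ℝ}
    (hg : ∀ x, HasDerivAt g (g' x) x) {C : ℝ} {n : ℕ}
    (hgb : ∀ x, |g x| ≤ C * (1 + |x|) ^ n)
    (hint : Integrable (fun x => (g' x - g x * V1 x) * exp (-V x))) :
    ∫ x, (g' x - g x * V1 x) * exp (-V x) = 0 := by
  have hF : ∀ x, HasDerivAt (fun y => g y * exp (-V y))
      ((g' x - g x * V1 x) * exp (-V x)) x := by
    intro x
    have h1 : HasDerivAt (fun y => exp (-V y)) (exp (-V x) * (-V1 x)) x :=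
      ((H.dV x).neg).exp
    have h2 := (hg x).mul h1
    convert h2 using 1
    rfl
    rfl
    rfl
    ring
  have ht := H.tendsto_mul_dens hgb
  have := integral_of_hasDerivAt_of_tendsto hF hint ht.2 ht.1
  simpa using this


/-- Polynomially bounded functions. -/
def PB (f : ℝ → ℝ) : Prop := ∃ (C : ℝ) (n : ℕ), ∀ x, |f x| ≤ C * (1 + |x|) ^ n

lemma one_le_base (x : ℝ) : (1:ℝ) ≤ 1 + |x| := by linarith [abs_nonneg x]

lemma PB.C_nonneg {f : ℝ → ℝ} {C : ℝ} {n : ℕ} (h : ∀ x, |f x| ≤ C * (1 + |x|) ^ n) : 0 ≤ C := by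
  have h0 := h 0
  have h1 : ((1:ℝ) + |(0:ℝ)|) ^ n = 1 := by simp
  rw [h1] at h0
  simpa using le_trans (abs_nonneg (f 0)) h0

lemma pb_const (c : ℝ) : PB (fun _ => c) := ⟨|c|, 0, fun x => by simp⟩

lemma pb_id : PB (fun x : ℝ => x) :=
  ⟨1, 1, fun x => by simpa using by linarith [abs_nonneg x]⟩

lemma PB.add {f g : ℝ → ℝ} (hf : PB f) (hg : PB g) : PB (fun x => f x + g x) := by
  obtain ⟨C, n, hC⟩ := hf
  obtain ⟨D, m, hD⟩ := hg
  refine ⟨C + D, max n m, fun x => ?_⟩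
  have h1 : (1 + |x|) ^ n ≤ (1 + |x|) ^ (max n m) :=
    pow_le_pow_right₀ (one_le_base x) (le_max_left n m)
  have h2 : (1 + |x|) ^ m ≤ (1 + |x|) ^ (max n m) :=
    pow_le_pow_right₀ (one_le_base x) (le_max_right n m)
  have h3 := abs_add_le (f x) (g x)
  have hC0 := PB.C_nonneg hC
  have hD0 := PB.C_nonneg hD
  nlinarith [hC x, hD x]

lemma PB.neg {f : ℝ → ℝ} (hf : PB f) : PB (fun x => -f x) := by
  obtain ⟨C, n, hC⟩ := hf
  exact ⟨C, n, fun x => by rw [abs_neg]; exact hC x⟩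

lemma PB.sub {f g : ℝ → ℝ} (hf : PB f) (hg : PB g) : PB (fun x => f x - g x) := by
  have := hf.add hg.neg
  simpa [sub_eq_add_neg] using this

lemma PB.mul {f g : ℝ → ℝ} (hf : PB f) (hg : PB g) : PB (fun x => f x * g x) := by
  obtain ⟨C, n, hC⟩ := hf
  obtain ⟨D, m, hD⟩ := hg
  refine ⟨C * D, n + m, fun x => ?_⟩
  rw [abs_mul, pow_add]
  have hC0 := PB.C_nonneg hC
  have hD0 := PB.C_nonneg hD
  calc |f x| * |g x| ≤ (C * (1 + |x|) ^ n) * (D * (1 + |x|) ^ m) :=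
        mul_le_mul (hC x) (hD x) (abs_nonneg _) (by positivity)
    _ = C * D * ((1 + |x|) ^ n * (1 + |x|) ^ m) := by ring

lemma PB.of_abs_le {f g : ℝ → ℝ} (hg : PB g) (h : ∀ x, |f x| ≤ |g x|) : PB f := by
  obtain ⟨C, n, hC⟩ := hg
  exact ⟨C, n, fun x => le_trans (h x) (hC x)⟩

lemma PB.abs {f : ℝ → ℝ} (hf : PB f) : PB (fun x => |f x|) :=
  PB.of_abs_le hf (fun x => by rw [abs_abs])

lemma PB.pow {f : ℝ → ℝ} (hf : PB f) : ∀ k : ℕ, PB (fun x => f x ^ k)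
  | 0 => by simpa using pb_const 1
  | (k+1) => by
      have := (PB.pow hf k).mul hf
      have heq : (fun x => f x ^ k * f x) = fun x => f x ^ (k+1) :=
        funext fun x => (pow_succ (f x) k).symm
      rwa [heq] at this

lemma pb_bounded {f : ℝ → ℝ} {c : ℝ} (h : ∀ x, |f x| ≤ c) : PB f :=
  ⟨c, 0, fun x => by simpa using h x⟩




lemma aux_pos_of_one_le_mul {b v : ℝ} (hb : 0 < b) (h0 : 0 ≤ v) (h : 1 ≤ b * v) : 0 < v := by
  nlinarith

lemma aux_sq_le {r q K : ℝ} (h : |r| ≤ K / 2 * q) (hq : 0 ≤ q) : r ^ 2 ≤ K ^ 2 / 4 * q ^ 2 := by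
  nlinarith [abs_nonneg r, sq_abs r]

lemma aux_cancel {D R : ℝ} (hD : 0 < D) (h : D ^ 2 ≤ D * R) : D ≤ R := by nlinarith

lemma aux_sqrt_half {t s : ℝ} (ht : 0 ≤ t) (hs : 0 ≤ s) (h : t ^ 2 ≤ s ^ 2 / 4) : t ≤ s / 2 := by
  nlinarith [sq_nonneg (t - s / 2), sq_nonneg (t + s / 2)]

lemma aux_quad_root {a s : ℝ} (ha : 0 < a) (hs : 0 ≤ s)
    (h : a ^ 2 * s ^ 2 ≤ 3 + a * s / 2) : s ≤ 2 / a := by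
  have hroot : a * s ≤ 2 := by
    by_contra hc
    push_neg at hc
    have h1 : 0 < a * s - 2 := by linarith only [hc]
    have h2 : 0 < a * s + 3 / 2 := by linarith only [hc]
    have h3 := mul_pos h1 h2
    nlinarith [h3, h]
  rw [le_div_iff₀ ha]
  linarith only [hroot]

lemma aux_large {a b K3 E vi : ℝ} (ha : 0 < a) (hb : 0 < b) (hab : a ≤ b)
    (hc : a ^ 3 < K3 ^ 2) (hE : E ≤ b) (hvi : a ≤ vi) : E - K3 ^ 2 * b ^ 2 / a ^ 4 ≤ vi := by
  have h1 : b ^ 2 / a ≤ K3 ^ 2 * b ^ 2 / a ^ 4 := by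
    have h2 : b ^ 2 / a = a ^ 3 * b ^ 2 / a ^ 4 := by field_simp
    rw [h2]
    exact (div_le_div_iff_of_pos_right (by positivity)).2
      (mul_le_mul_of_nonneg_right hc.le (sq_nonneg b))
  have h3 : b - b ^ 2 / a ≤ a := by
    have h5 : b - a ≤ b ^ 2 / a := by
      rw [le_div_iff₀ ha]
      nlinarith [sq_nonneg (a - b), mul_pos ha hb]
    linarith
  linarith

set_option maxHeartbeats 1000000 in
theorem Hyp.main (H : Hyp V V1 V2 V3 a b K3) (ν : Measure ℝ)
    (hν : ν = ((volume.withDensity fun x => ENNReal.ofReal (exp (-V x))) Set.univ)⁻¹ •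
      (volume.withDensity fun x => ENNReal.ofReal (exp (-V x)))) :
    IsProbabilityMeasure ν ∧ Integrable (fun x => x) ν ∧ Integrable (fun x => x ^ 2) ν ∧
      Integrable V2 ν ∧ 0 < (∫ x, (x - ∫ y, y ∂ν) ^ 2 ∂ν) ∧
      (∫ x, V2 x ∂ν) - K3 ^ 2 * b ^ 2 / a ^ 4 ≤ (∫ x, (x - ∫ y, y ∂ν) ^ 2 ∂ν)⁻¹ := by
  have ha := H.ha
  have hb := H.hb
  have hK0 := H.hK0
  set ρ : ℝ → ℝ := fun x => exp (-V x) with hρdef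
  have hρpos : ∀ x, 0 < ρ x := fun x => exp_pos _
  have hρc : Continuous ρ := Real.continuous_exp.comp H.contV.neg
  have hρm : Measurable fun x => ENNReal.ofReal (ρ x) := hρc.measurable.ennreal_ofReal
  -- the density is integrable
  have hρint : Integrable ρ := by
    have := H.integrable_polybound (f := fun _ => (1:ℝ))
      (continuous_const.aestronglyMeasurable) (C := 1) (n := 0) (fun x => by simp)
    simpa using this
  set Z : ℝ := ∫ x, ρ x with hZdef
  have hZ0 : 0 < Z := by
    rw [hZdef, integral_pos_iff_support_of_nonneg (fun x => (hρpos x).le) hρint]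
    have : Function.support ρ = Set.univ := by
      ext x; simp [Function.support, (hρpos x).ne']
    rw [this]
    simp
  -- mass of the unnormalized measure
  have hmass : (volume.withDensity fun x => ENNReal.ofReal (ρ x)) Set.univ
      = ENNReal.ofReal Z := by
    rw [withDensity_apply _ MeasurableSet.univ, setLIntegral_univ,
      ← ofReal_integral_eq_lintegral_ofReal hρint (ae_of_all _ fun x => (hρpos x).le)]
  have hZne0 : ENNReal.ofReal Z ≠ 0 := by
    simp [ENNReal.ofReal_pos.2 hZ0, ne_of_gt]
  have hZnetop : ENNReal.ofReal Z ≠ ⊤ := ENNReal.ofReal_ne_top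
  have hcne0 : (ENNReal.ofReal Z)⁻¹ ≠ 0 := by
    simp [ENNReal.inv_ne_zero, hZnetop]
  have hcnetop : (ENNReal.ofReal Z)⁻¹ ≠ ⊤ := by
    simp [ENNReal.inv_ne_top, hZne0]
  rw [hmass] at hν
  -- probability measure
  have hprob : IsProbabilityMeasure ν := by
    constructor
    rw [hν, Measure.smul_apply, hmass, smul_eq_mul, ENNReal.inv_mul_cancel hZne0 hZnetop]
  -- integrability transfer
  have intv : ∀ {f : ℝ → ℝ}, Continuous f → PB f → Integrable f ν := by
    intro f hc hpb
    obtain ⟨C, n, hCn⟩ := hpb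
    rw [hν, integrable_smul_measure hcne0 hcnetop,
      integrable_withDensity_iff_integrable_smul' hρm
        (ae_of_all _ fun x => ENNReal.ofReal_lt_top)]
    have heqf : (fun x => (ENNReal.ofReal (ρ x)).toReal • f x) = fun x => f x * ρ x :=
      funext fun x => by
        rw [ENNReal.toReal_ofReal (hρpos x).le, smul_eq_mul, mul_comm]
    rw [heqf]
    exact H.integrable_polybound hc.aestronglyMeasurable hCn
  -- integral transfer
  have ival : ∀ f : ℝ → ℝ, ∫ x, f x ∂ν = (∫ x, f x * ρ x) / Z := by
    intro f
    rw [hν, integral_smul_measure]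
    have hd_eq : (fun x => ENNReal.ofReal (ρ x)) = (fun x => ((ρ x).toNNReal : ℝ≥0∞)) := rfl
    have hmeas : Measurable fun x => (ρ x).toNNReal := hρc.measurable.real_toNNReal
    rw [hd_eq, integral_withDensity_eq_integral_smul hmeas]
    have h1 : (fun x => (ρ x).toNNReal • f x) = fun x => f x * ρ x := funext fun x => by
      rw [NNReal.smul_def, Real.coe_toNNReal _ (hρpos x).le, smul_eq_mul, mul_comm]
    rw [h1, ENNReal.toReal_inv, ENNReal.toReal_ofReal hZ0.le, smul_eq_mul, div_eq_inv_mul]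
  -- integration by parts
  have ibpν : ∀ (g g' : ℝ → ℝ), (∀ x, HasDerivAt g (g' x) x) → PB g → Continuous g' → PB g' →
      ∫ x, (g' x - g x * V1 x) ∂ν = 0 := by
    intro g g' hder hpbg hcg' hpbg'
    obtain ⟨C, n, hCn⟩ := hpbg
    have hcg : Continuous g := (Differentiable.continuous (fun x => (hder x).differentiableAt))
    have hpbg2 : PB g := ⟨C, n, hCn⟩
    have hpbV1 : PB V1 := ⟨_, _, H.V1_growth⟩
    have hpbf : PB (fun x => g' x - g x * V1 x) := hpbg'.sub (hpbg2.mul hpbV1)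
    obtain ⟨Cf, nf, hCf⟩ := hpbf
    have hcf : Continuous (fun x => g' x - g x * V1 x) := hcg'.sub (hcg.mul H.contV1)
    have hint : Integrable (fun x => (g' x - g x * V1 x) * ρ x) :=
      H.integrable_polybound hcf.aestronglyMeasurable hCf
    have h0 := H.ibp hder hCn hint
    have h0' : (∫ x, (g' x - g x * V1 x) * ρ x) = 0 := h0
    rw [ival, h0', zero_div]
  haveI := hprob
  clear ival
  -- polynomial boundedness facts
  have hpbV1 : PB V1 := ⟨_, _, H.V1_growth⟩
  have hpbV2 : PB V2 := pb_bounded (c := |a| + |b|) (fun x => abs_le.2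
    ⟨by linarith [H.hA x, neg_abs_le a, abs_nonneg b], by linarith [H.hBb x, le_abs_self b, abs_nonneg a]⟩)
  -- basic integrable functions
  have int_x : Integrable (fun x : ℝ => x) ν := intv continuous_id pb_id
  have int_x2 : Integrable (fun x : ℝ => x ^ 2) ν := intv (by fun_prop) (pb_id.pow 2)
  have int_V1 : Integrable V1 ν := intv H.contV1 hpbV1
  have int_V2 : Integrable V2 ν := intv H.contV2 hpbV2
  set μ1 : ℝ := ∫ y, y ∂ν with hμ1
  have pbp : PB (fun x : ℝ => x - μ1) := pb_id.sub (pb_const μ1)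
  have pcont : Continuous (fun x : ℝ => x - μ1) := by fun_prop
  have int_p : Integrable (fun x : ℝ => x - μ1) ν := intv pcont pbp
  have int_p2 : Integrable (fun x : ℝ => (x - μ1) ^ 2) ν := intv (by fun_prop) (pbp.pow 2)
  have int_p3 : Integrable (fun x : ℝ => (x - μ1) ^ 3) ν := intv (by fun_prop) (pbp.pow 3)
  have int_p4 : Integrable (fun x : ℝ => (x - μ1) ^ 4) ν := intv (by fun_prop) (pbp.pow 4)
  have int_absp3 : Integrable (fun x : ℝ => |x - μ1| ^ 3) ν :=
    intv ((continuous_abs.comp pcont).pow 3) (pbp.abs.pow 3)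
  have int_xV1 : Integrable (fun x : ℝ => x * V1 x) ν :=
    intv (continuous_id.mul H.contV1) (pb_id.mul hpbV1)
  have int_pV1 : Integrable (fun x : ℝ => (x - μ1) * V1 x) ν :=
    intv (pcont.mul H.contV1) (pbp.mul hpbV1)
  have int_p3V1 : Integrable (fun x : ℝ => (x - μ1) ^ 3 * V1 x) ν :=
    intv (((by fun_prop : Continuous (fun x : ℝ => (x - μ1) ^ 3))).mul H.contV1)
      ((pbp.pow 3).mul hpbV1)
  have int_V1sq : Integrable (fun x : ℝ => V1 x ^ 2) ν := intv (H.contV1.pow 2) (hpbV1.pow 2)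
  have int_V1mul : Integrable (fun x : ℝ => V1 x * V1 x) ν :=
    intv (H.contV1.mul H.contV1) (hpbV1.mul hpbV1)
  -- mean zero
  have hEp : ∫ x, (x - μ1) ∂ν = 0 := by
    rw [integral_sub int_x (integrable_const μ1), integral_const]
    simp [measure_univ, ← hμ1]
  -- IBP identities
  have hEV1 : ∫ x, V1 x ∂ν = 0 := by
    have h := ibpν (fun _ => (1:ℝ)) (fun _ => (0:ℝ)) (fun x => hasDerivAt_const x 1)
      (pb_const 1) continuous_const (pb_const 0)
    have h2 : (fun x => (0:ℝ) - 1 * V1 x) = fun x => -V1 x := funext fun x => by ring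
    rw [h2, integral_neg] at h
    linarith only [h]
  have hExV1 : ∫ x, x * V1 x ∂ν = 1 := by
    have h := ibpν (fun x => x) (fun _ => (1:ℝ)) (fun x => hasDerivAt_id' (x := x))
      pb_id continuous_const (pb_const 1)
    rw [integral_sub (integrable_const 1) int_xV1, integral_const] at h
    simp only [measure_univ, probReal_univ, ENNReal.toReal_one, smul_eq_mul, one_mul] at h
    linarith only [h]
  have hEpV1 : ∫ x, (x - μ1) * V1 x ∂ν = 1 := by
    have h2 : (fun x => (x - μ1) * V1 x) = fun x => x * V1 x - μ1 * V1 x :=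
      funext fun x => by ring
    rw [h2, integral_sub int_xV1 (int_V1.const_mul μ1), integral_const_mul, hExV1, hEV1]
    ring
  have h3v : ∫ x, (x - μ1) ^ 3 * V1 x ∂ν = 3 * ∫ x, (x - μ1) ^ 2 ∂ν := by
    have hder : ∀ x : ℝ, HasDerivAt (fun x => (x - μ1) ^ 3) (3 * (x - μ1) ^ 2) x := by
      intro x
      have h0 := ((hasDerivAt_id x).sub_const μ1).pow 3
      convert h0 using 1
      rfl
      rfl
      rfl
      simp [id_eq]
      try ring
    have h := ibpν (fun x => (x - μ1) ^ 3) (fun x => 3 * (x - μ1) ^ 2) hder (pbp.pow 3)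
      (by fun_prop) ((pb_const 3).mul (pbp.pow 2))
    rw [integral_sub ((int_p2.const_mul 3)) int_p3V1, integral_const_mul] at h
    linarith only [h]
  have hEV2V1 : ∫ x, V2 x ∂ν = ∫ x, V1 x ^ 2 ∂ν := by
    have h := ibpν V1 V2 H.dV1 hpbV1 H.contV2 hpbV2
    rw [integral_sub int_V2 int_V1mul] at h
    have h2 : ∫ x, V1 x * V1 x ∂ν = ∫ x, V1 x ^ 2 ∂ν :=
      integral_congr_ae (ae_of_all _ fun x => by ring)
    linarith only [h, h2]
  -- variance
  set v : ℝ := ∫ x, (x - μ1) ^ 2 ∂ν with hv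
  have hv0le : 0 ≤ v := integral_nonneg fun x => sq_nonneg _
  have hEpshift : ∫ x, (x - μ1) * (V1 x - V1 μ1) ∂ν = 1 := by
    have h2 : (fun x => (x - μ1) * (V1 x - V1 μ1)) =
        fun x => (x - μ1) * V1 x - V1 μ1 * (x - μ1) := funext fun x => by ring
    rw [h2, integral_sub int_pV1 (int_p.const_mul (V1 μ1)), integral_const_mul, hEpV1, hEp]
    ring
  have int_pshift : Integrable (fun x => (x - μ1) * (V1 x - V1 μ1)) ν :=
    intv (pcont.mul (H.contV1.sub continuous_const)) (pbp.mul (hpbV1.sub (pb_const _)))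
  have hav : a * v ≤ 1 := by
    have hmono := integral_mono (int_p2.const_mul a) int_pshift
      (fun x => (H.quad x μ1).1)
    rw [integral_const_mul, hEpshift] at hmono
    exact hmono
  have hbv : 1 ≤ b * v := by
    have hmono := integral_mono int_pshift (int_p2.const_mul b)
      (fun x => (H.quad x μ1).2)
    rw [integral_const_mul, hEpshift] at hmono
    exact hmono
  have hv0 : 0 < v := aux_pos_of_one_le_mul hb hv0le hbv
  -- moments
  set m4 : ℝ := ∫ x, (x - μ1) ^ 4 ∂ν with hm4
  set m3 : ℝ := ∫ x, (x - μ1) ^ 3 ∂ν with hm3def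
  set m3a : ℝ := ∫ x, |x - μ1| ^ 3 ∂ν with hm3a
  have m4_0 : 0 ≤ m4 := integral_nonneg fun x => by positivity
  have m3a_0 : 0 ≤ m3a := integral_nonneg fun x => by positivity
  have hm3abs : |m3| ≤ m3a := by
    have h := norm_integral_le_integral_norm (μ := ν) (f := fun x => (x - μ1) ^ 3)
    rw [Real.norm_eq_abs] at h
    have h2 : ∫ x, ‖(x - μ1) ^ 3‖ ∂ν = m3a := by
      apply integral_congr_ae (ae_of_all _ fun x => ?_)
      simp only [Real.norm_eq_abs, abs_pow]
    rw [h2] at h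
    exact h
  -- Taylor remainder
  have hRb : ∀ x, |V1 x - V1 μ1 - V2 μ1 * (x - μ1)| ≤ K3 / 2 * (x - μ1) ^ 2 :=
    fun x => H.taylor μ1 x
  have hcR : Continuous (fun x => V1 x - V1 μ1 - V2 μ1 * (x - μ1)) :=
    (H.contV1.sub continuous_const).sub (continuous_const.mul pcont)
  have int_R : Integrable (fun x => V1 x - V1 μ1 - V2 μ1 * (x - μ1)) ν :=
    intv hcR ((hpbV1.sub (pb_const _)).sub ((pb_const (V2 μ1)).mul pbp))
  have int_absR : Integrable (fun x => |V1 x - V1 μ1 - V2 μ1 * (x - μ1)|) ν :=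
    intv hcR.abs ((hpbV1.sub (pb_const _)).sub ((pb_const (V2 μ1)).mul pbp)).abs
  have int_R2 : Integrable (fun x => (V1 x - V1 μ1 - V2 μ1 * (x - μ1)) ^ 2) ν :=
    intv (hcR.pow 2) (((hpbV1.sub (pb_const _)).sub ((pb_const (V2 μ1)).mul pbp)).pow 2)
  have intV1c : Integrable (fun x => V1 x - V1 μ1) ν := int_V1.sub (integrable_const (V1 μ1))
  have hER : ∫ x, (V1 x - V1 μ1 - V2 μ1 * (x - μ1)) ∂ν = -V1 μ1 := by
    rw [integral_sub intV1c (int_p.const_mul (V2 μ1)),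
      integral_sub int_V1 (integrable_const (V1 μ1)), integral_const_mul, hEV1, hEp,
      integral_const]
    simp [measure_univ]
  have hV1μ : |V1 μ1| ≤ K3 / 2 * v := by
    have h1 : |∫ x, (V1 x - V1 μ1 - V2 μ1 * (x - μ1)) ∂ν| ≤
        ∫ x, |V1 x - V1 μ1 - V2 μ1 * (x - μ1)| ∂ν := by
      have h := norm_integral_le_integral_norm (μ := ν)
        (f := fun x => V1 x - V1 μ1 - V2 μ1 * (x - μ1))
      rw [Real.norm_eq_abs] at h
      refine le_trans h (le_of_eq (integral_congr_ae (ae_of_all _ fun x => ?_)))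
      simp only [Real.norm_eq_abs]
    have h2 : ∫ x, |V1 x - V1 μ1 - V2 μ1 * (x - μ1)| ∂ν ≤ K3 / 2 * v := by
      have := integral_mono int_absR (int_p2.const_mul (K3 / 2)) (fun x => hRb x)
      rw [integral_const_mul] at this
      exact this
    rw [hER] at h1
    rw [abs_neg] at h1
    linarith only [h1, h2]
  -- fourth moment bound
  have ham4 : a * m4 ≤ 3 * v + (K3 / 2 * v) * m3a := by
    have s1 : ∫ x, (x - μ1) ^ 3 * (V1 x - V1 μ1) ∂ν = 3 * v - V1 μ1 * m3 := by
      have h2 : (fun x => (x - μ1) ^ 3 * (V1 x - V1 μ1)) =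
          fun x => (x - μ1) ^ 3 * V1 x - V1 μ1 * (x - μ1) ^ 3 := funext fun x => by ring
      rw [h2, integral_sub int_p3V1 (int_p3.const_mul (V1 μ1)), integral_const_mul, h3v]
    have int_p3shift : Integrable (fun x => (x - μ1) ^ 3 * (V1 x - V1 μ1)) ν :=
      intv ((by fun_prop : Continuous fun x : ℝ => (x - μ1) ^ 3).mul
        (H.contV1.sub continuous_const)) ((pbp.pow 3).mul (hpbV1.sub (pb_const _)))
    have s2 : a * m4 ≤ ∫ x, (x - μ1) ^ 3 * (V1 x - V1 μ1) ∂ν := by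
      have := integral_mono (int_p4.const_mul a) int_p3shift (fun x => H.quart x μ1)
      rw [integral_const_mul] at this
      exact this
    have s3 : -(V1 μ1 * m3) ≤ (K3 / 2 * v) * m3a := by
      have h4 : |V1 μ1 * m3| ≤ (K3 / 2 * v) * m3a := by
        rw [abs_mul]
        apply mul_le_mul hV1μ hm3abs (abs_nonneg _)
        positivity
      have h5 := neg_abs_le (V1 μ1 * m3)
      linarith only [h4, h5]
    have s4 : a * m4 ≤ 3 * v - V1 μ1 * m3 := s1 ▸ s2
    linarith only [s3, s4]
  -- Cauchy-Schwarz for the third absolute moment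
  have hcs1 : m3a ^ 2 ≤ v * m4 := by
    have hf2 : Integrable (fun x => |x - μ1| ^ 2) ν :=
      int_p2.congr (ae_of_all _ fun x => (sq_abs _).symm)
    have hg2 : Integrable (fun x => ((x - μ1) ^ 2) ^ 2) ν :=
      int_p4.congr (ae_of_all _ fun x => by ring)
    have hfg : Integrable (fun x => |x - μ1| * (x - μ1) ^ 2) ν :=
      int_absp3.congr (ae_of_all _ fun x => by
        show |x - μ1| ^ 3 = |x - μ1| * (x - μ1) ^ 2
        rw [← sq_abs]; ring)
    have h := integral_cauchy_schwarz hf2 hg2 hfg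
    have e1 : ∫ x, |x - μ1| * (x - μ1) ^ 2 ∂ν = m3a :=
      integral_congr_ae (ae_of_all _ fun x => by
        show |x - μ1| * (x - μ1) ^ 2 = |x - μ1| ^ 3
        rw [← sq_abs]; ring)
    have e2 : ∫ x, |x - μ1| ^ 2 ∂ν = v :=
      integral_congr_ae (ae_of_all _ fun x => sq_abs _)
    have e3 : ∫ x, ((x - μ1) ^ 2) ^ 2 ∂ν = m4 :=
      integral_congr_ae (ae_of_all _ fun x => by ring)
    rw [e1, e2, e3] at h
    exact h
  -- the W function
  have hWpb : PB (fun x => V1 x - (x - μ1) * v⁻¹) := hpbV1.sub (pbp.mul (pb_const v⁻¹))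
  have hWc : Continuous (fun x => V1 x - (x - μ1) * v⁻¹) := by
    apply H.contV1.sub (pcont.mul continuous_const)
  have int_W : Integrable (fun x => V1 x - (x - μ1) * v⁻¹) ν := intv hWc hWpb
  have int_W2 : Integrable (fun x => (V1 x - (x - μ1) * v⁻¹) ^ 2) ν :=
    intv (hWc.pow 2) (hWpb.pow 2)
  have int_Wp : Integrable (fun x => (V1 x - (x - μ1) * v⁻¹) * (x - μ1)) ν :=
    intv (hWc.mul pcont) (hWpb.mul pbp)
  have int_WR : Integrable
      (fun x => (V1 x - (x - μ1) * v⁻¹) * (V1 x - V1 μ1 - V2 μ1 * (x - μ1))) ν :=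
    intv (hWc.mul hcR) (hWpb.mul ((hpbV1.sub (pb_const _)).sub
      ((pb_const (V2 μ1)).mul pbp)))
  have hEW : ∫ x, (V1 x - (x - μ1) * v⁻¹) ∂ν = 0 := by
    have h2 : (fun x => V1 x - (x - μ1) * v⁻¹) = fun x => V1 x - v⁻¹ * (x - μ1) :=
      funext fun x => by ring
    rw [h2, integral_sub int_V1 (int_p.const_mul v⁻¹), integral_const_mul, hEV1, hEp]
    ring
  have hEWp : ∫ x, (V1 x - (x - μ1) * v⁻¹) * (x - μ1) ∂ν = 0 := by
    have h2 : (fun x => (V1 x - (x - μ1) * v⁻¹) * (x - μ1)) =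
        fun x => (x - μ1) * V1 x - v⁻¹ * (x - μ1) ^ 2 := funext fun x => by ring
    rw [h2, integral_sub int_pV1 (int_p2.const_mul v⁻¹), integral_const_mul, hEpV1, ← hv,
      inv_mul_cancel₀ hv0.ne']
    ring
  have hEW2 : ∫ x, (V1 x - (x - μ1) * v⁻¹) ^ 2 ∂ν = (∫ x, V2 x ∂ν) - v⁻¹ := by
    have h2 : (fun x => (V1 x - (x - μ1) * v⁻¹) ^ 2) =
        fun x => V1 x ^ 2 - (2 * v⁻¹) * ((x - μ1) * V1 x) + (v⁻¹ * v⁻¹) * (x - μ1) ^ 2 :=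
      funext fun x => by ring
    have iA : Integrable (fun x => V1 x ^ 2 - 2 * v⁻¹ * ((x - μ1) * V1 x)) ν :=
      int_V1sq.sub (int_pV1.const_mul (2 * v⁻¹))
    rw [h2, integral_add iA
      (int_p2.const_mul (v⁻¹ * v⁻¹)), integral_sub int_V1sq (int_pV1.const_mul (2 * v⁻¹)),
      integral_const_mul, integral_const_mul, hEpV1, ← hv, ← hEV2V1]
    have : v⁻¹ * v⁻¹ * v = v⁻¹ := by field_simp
    rw [this]
    ring
  have hEWR : ∫ x, (V1 x - (x - μ1) * v⁻¹) ^ 2 ∂ν =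
      ∫ x, (V1 x - (x - μ1) * v⁻¹) * (V1 x - V1 μ1 - V2 μ1 * (x - μ1)) ∂ν := by
    have h2 : (fun x => (V1 x - (x - μ1) * v⁻¹) ^ 2) =
        fun x => (V1 μ1) * (V1 x - (x - μ1) * v⁻¹) +
          ((V2 μ1 - v⁻¹) * ((V1 x - (x - μ1) * v⁻¹) * (x - μ1)) +
          (V1 x - (x - μ1) * v⁻¹) * (V1 x - V1 μ1 - V2 μ1 * (x - μ1))) :=
      funext fun x => by ring
    have iB : Integrable (fun x => (V2 μ1 - v⁻¹) * ((V1 x - (x - μ1) * v⁻¹) * (x - μ1)) +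
        (V1 x - (x - μ1) * v⁻¹) * (V1 x - V1 μ1 - V2 μ1 * (x - μ1))) ν :=
      (int_Wp.const_mul (V2 μ1 - v⁻¹)).add int_WR
    rw [h2, integral_add (int_W.const_mul (V1 μ1)) iB,
      integral_add (int_Wp.const_mul (V2 μ1 - v⁻¹)) int_WR,
      integral_const_mul, integral_const_mul, hEW, hEWp]
    ring
  have hR2le : ∫ x, (V1 x - V1 μ1 - V2 μ1 * (x - μ1)) ^ 2 ∂ν ≤ K3 ^ 2 / 4 * m4 := by
    have hpt : ∀ x, (V1 x - V1 μ1 - V2 μ1 * (x - μ1)) ^ 2 ≤ (K3 ^ 2 / 4) * (x - μ1) ^ 4 := by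
      intro x
      have h2 := aux_sq_le (hRb x) (sq_nonneg (x - μ1))
      exact le_of_le_of_eq h2 (by ring)
    have := integral_mono int_R2 (int_p4.const_mul (K3 ^ 2 / 4)) hpt
    rw [integral_const_mul] at this
    exact this
  have hW2nn : 0 ≤ ∫ x, (V1 x - (x - μ1) * v⁻¹) ^ 2 ∂ν := integral_nonneg fun x => sq_nonneg _
  have hR2nn : 0 ≤ ∫ x, (V1 x - V1 μ1 - V2 μ1 * (x - μ1)) ^ 2 ∂ν :=
    integral_nonneg fun x => sq_nonneg _
  have hDDle : ∫ x, (V1 x - (x - μ1) * v⁻¹) ^ 2 ∂ν ≤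
      ∫ x, (V1 x - V1 μ1 - V2 μ1 * (x - μ1)) ^ 2 ∂ν := by
    have hcs2 := integral_cauchy_schwarz int_W2 int_R2 int_WR
    rw [← hEWR] at hcs2
    rcases eq_or_lt_of_le hW2nn with h0 | h0
    · linarith only [hR2nn, h0]
    · exact aux_cancel h0 hcs2
  -- final inequality
  have hbge : a ≤ b := H.hab
  have key : (∫ x, V2 x ∂ν) - v⁻¹ ≤ K3 ^ 2 * b ^ 2 / a ^ 4 := by
    rcases le_or_gt (K3 ^ 2) (a ^ 3) with hcase | hcase
    · -- small K3: m4 ≤ 4/a²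
      have hva : v ≤ 1 / a := by rw [le_div_iff₀ ha]; linarith only [hav]
      have hm4b : m4 ≤ 4 / a ^ 2 := by
        set s : ℝ := Real.sqrt m4 with hs
        have hs2 : s ^ 2 = m4 := Real.sq_sqrt m4_0
        have hs0 : 0 ≤ s := Real.sqrt_nonneg _
        set t : ℝ := K3 / 2 * v * m3a with ht
        have ht0 : 0 ≤ t := by positivity
        have hK3v3 : K3 ^ 2 * v ^ 3 ≤ 1 := by
          have h13 : v ^ 3 ≤ (1 / a) ^ 3 := pow_le_pow_left₀ hv0.le hva 3
          calc K3 ^ 2 * v ^ 3 ≤ a ^ 3 * (1 / a) ^ 3 :=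
                mul_le_mul hcase h13 (by positivity) (by positivity)
            _ = 1 := by field_simp
        have ht2 : t ^ 2 ≤ m4 / 4 := by
          have h1 : t ^ 2 = K3 ^ 2 / 4 * v ^ 2 * m3a ^ 2 := by rw [ht]; ring
          have h2 : K3 ^ 2 / 4 * v ^ 2 * m3a ^ 2 ≤ K3 ^ 2 / 4 * v ^ 2 * (v * m4) := by
            apply mul_le_mul_of_nonneg_left hcs1 (by positivity)
          have h3 : K3 ^ 2 / 4 * v ^ 2 * (v * m4) = (K3 ^ 2 * v ^ 3) * m4 / 4 := by ring
          have h4 := mul_le_mul_of_nonneg_right hK3v3 m4_0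
          linarith only [h1, h2, h3, h4]
        have hts : t ≤ s / 2 := by
          apply aux_sqrt_half ht0 hs0
          have : s ^ 2 / 4 = m4 / 4 := by rw [hs2]
          linarith only [ht2, this]
        have hsle : s ≤ 2 / a := by
          apply aux_quad_root ha hs0
          have h1 : a * s ^ 2 ≤ 3 * v + t := by rw [hs2]; linarith only [ham4]
          have h1' := mul_le_mul_of_nonneg_left h1 ha.le
          have h2' := mul_le_mul_of_nonneg_left hts ha.le
          linarith only [h1', h2', hav]
        calc m4 = s ^ 2 := hs2.symm
          _ ≤ (2 / a) ^ 2 := by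
            apply pow_le_pow_left₀ hs0 hsle
          _ = 4 / a ^ 2 := by ring
      have hend : K3 ^ 2 / 4 * m4 ≤ K3 ^ 2 * b ^ 2 / a ^ 4 := by
        have h1 : K3 ^ 2 / 4 * m4 ≤ K3 ^ 2 / 4 * (4 / a ^ 2) :=
          mul_le_mul_of_nonneg_left hm4b (by positivity)
        have h2 : K3 ^ 2 / 4 * (4 / a ^ 2) = K3 ^ 2 * a ^ 2 / a ^ 4 := by field_simp
        have h3 : K3 ^ 2 * a ^ 2 / a ^ 4 ≤ K3 ^ 2 * b ^ 2 / a ^ 4 :=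
          (div_le_div_iff_of_pos_right (by positivity)).2
            (mul_le_mul_of_nonneg_left (pow_le_pow_left₀ ha.le hbge 2) (sq_nonneg K3))
        linarith only [h1, h2, h3]
      have hfin : (∫ x, V2 x ∂ν) - v⁻¹ ≤ K3 ^ 2 / 4 * m4 := hEW2 ▸ (le_trans hDDle hR2le)
      linarith only [hfin, hend]
    · -- large K3
      have hEV2b : ∫ x, V2 x ∂ν ≤ b := by
        have := integral_mono int_V2 (integrable_const b) (fun x => H.hBb x)
        rw [integral_const] at this
        simpa [measure_univ] using this
      have hainv : a ≤ v⁻¹ := by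
        rw [inv_eq_one_div, le_div_iff₀ hv0]
        linarith only [hav]
      have hl := aux_large ha hb hbge hcase hEV2b hainv
      linarith only [hl]
  have hgoal2 : (∫ x, V2 x ∂ν) - K3 ^ 2 * b ^ 2 / a ^ 4 ≤ v⁻¹ := by linarith only [key]
  exact ⟨hprob, int_x, int_x2, int_V2, hv0, hgoal2⟩



end HybridAux


open HybridAux in
set_option maxHeartbeats 1000000 in
/-- fine lower bound on the hybrid precision.  If `φ` is C³ with
`sup φ'' − inf φ'' ≤ B`, `|φ'''| ≤ K3` and `β + φ''(μ0) − B > 0`, then the hybrid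
is a well-defined probability measure with finite variance `v_h > 0` and
`v_h⁻¹ ≥ β + E_h[φ''] − K3²·(β + φ''(μ0) + B)²·(β + φ''(μ0) − B)⁻⁴`. -/
theorem hybrid_precision_lower_bound
    (φ : ℝ → ℝ) (B K3 : ℝ) (hφ : ContDiff ℝ 3 φ)
    (hB : ∀ x y, iteratedDeriv 2 φ x - iteratedDeriv 2 φ y ≤ B)
    (hK3 : ∀ x, |iteratedDeriv 3 φ x| ≤ K3)
    (β μ0 δr : ℝ) (hβ : 0 < β)
    (hpos : 0 < β + iteratedDeriv 2 φ μ0 - B) :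
    IsProbabilityMeasure (hybrid φ β μ0 δr) ∧
    Integrable (fun x => x) (hybrid φ β μ0 δr) ∧
    Integrable (fun x => x ^ 2) (hybrid φ β μ0 δr) ∧
    Integrable (fun x => iteratedDeriv 2 φ x) (hybrid φ β μ0 δr) ∧
    0 < hybridVar φ β μ0 δr ∧
    β + (∫ x, iteratedDeriv 2 φ x ∂(hybrid φ β μ0 δr)) -
        K3 ^ 2 * (β + iteratedDeriv 2 φ μ0 + B) ^ 2 /
          (β + iteratedDeriv 2 φ μ0 - B) ^ 4 ≤
      (hybridVar φ β μ0 δr)⁻¹ := by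
  set c : ℝ := β * μ0 - δr with hc
  set V : ℝ → ℝ := fun x => φ x + (β / 2 * x ^ 2 - c * x) with hV
  set V1 : ℝ → ℝ := fun x => deriv φ x + (β * x - c) with hV1
  set V2 : ℝ → ℝ := fun x => iteratedDeriv 2 φ x + β with hV2
  set V3 : ℝ → ℝ := fun x => iteratedDeriv 3 φ x with hV3
  -- differentiability facts
  have hD0 : Differentiable ℝ φ := hφ.differentiable (by norm_num)
  have hD1 : Differentiable ℝ (deriv φ) := by
    have h := hφ.differentiable_iteratedDeriv 1 (by norm_num)
    rwa [iteratedDeriv_one] at h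
  have hD2 : Differentiable ℝ (iteratedDeriv 2 φ) :=
    hφ.differentiable_iteratedDeriv 2 (by norm_num)
  have hder1 : ∀ x, HasDerivAt (deriv φ) (iteratedDeriv 2 φ x) x := by
    intro x
    have h := (hD1 x).hasDerivAt
    have h2 : iteratedDeriv 2 φ x = deriv (deriv φ) x := by
      rw [iteratedDeriv_succ, iteratedDeriv_one]
    rwa [h2]
  have hder2 : ∀ x, HasDerivAt (iteratedDeriv 2 φ) (iteratedDeriv 3 φ x) x := by
    intro x
    have h := (hD2 x).hasDerivAt
    have h2 : iteratedDeriv 3 φ x = deriv (iteratedDeriv 2 φ) x := by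
      rw [iteratedDeriv_succ]
    rwa [h2]
  -- the structure
  have H : Hyp V V1 V2 V3 (β + iteratedDeriv 2 φ μ0 - B) (β + iteratedDeriv 2 φ μ0 + B) K3 := by
    constructor
    · intro x
      have h1 : HasDerivAt (fun x : ℝ => β / 2 * x ^ 2 - c * x) (β * x - c) x := by
        have h2 := ((hasDerivAt_id x).pow 2).const_mul (β / 2)
        have h3 := (hasDerivAt_id x).const_mul c
        have h4 := h2.sub h3
        convert h4 using 1
        rfl
        rfl
        rfl
        simp [id_eq]
        ring
      exact ((hD0 x).hasDerivAt).add h1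
    · intro x
      have h1 : HasDerivAt (fun x : ℝ => β * x - c) β x := by
        have h2 := ((hasDerivAt_id x).const_mul β).sub_const c
        convert h2 using 1
        rfl
        rfl
        rfl
        simp [id_eq]
      exact (hder1 x).add h1
    · intro x
      exact (hder2 x).add_const β
    · exact hpos
    · intro x
      have := hB μ0 x
      simp only [hV2]
      linarith
    · intro x
      have := hB x μ0
      simp only [hV2]
      linarith
    · intro x
      exact hK3 x
  -- identify the hybrid measure
  have hfun : hybridDens φ β μ0 δr = fun x => Real.exp (-V x) := funext fun x => by
    simp only [hybridDens, hV, hc]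
    congr 1
    ring
  have hhyb : hybrid φ β μ0 δr =
      ((volume.withDensity fun x => ENNReal.ofReal (Real.exp (-V x))) Set.univ)⁻¹ •
        (volume.withDensity fun x => ENNReal.ofReal (Real.exp (-V x))) := by
    rw [hybrid, hfun]
  obtain ⟨hP, hIx, hIx2, hIV2, hvpos, hineq⟩ := H.main (hybrid φ β μ0 δr) hhyb
  haveI := hP
  have hIdd2 : Integrable (fun x => iteratedDeriv 2 φ x) (hybrid φ β μ0 δr) := by
    have h := hIV2.sub (integrable_const β)
    apply h.congr
    filter_upwards with x
    simp only [Pi.sub_apply, hV2]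
    ring
  have hvar : hybridVar φ β μ0 δr =
      ∫ x, (x - ∫ y, y ∂(hybrid φ β μ0 δr)) ^ 2 ∂(hybrid φ β μ0 δr) := rfl
  have hEV2 : ∫ x, V2 x ∂(hybrid φ β μ0 δr) =
      (∫ x, iteratedDeriv 2 φ x ∂(hybrid φ β μ0 δr)) + β := by
    have h2 : (fun x => V2 x) = fun x => iteratedDeriv 2 φ x + β := rfl
    rw [h2, integral_add hIdd2 (integrable_const β), integral_const]
    simp [measure_univ]
  refine ⟨hP, hIx, hIx2, hIdd2, ?_, ?_⟩
  · rw [hvar]; exact hvpos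
  · rw [hvar]
    rw [hEV2] at hineq
    linarith only [hineq]
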